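/- Let m : ℝ × ℝ³ → ℝ³ be twice continuously differentiable (ContDiff ℝ 2) with ‖m(t,x)‖ = 1 for all (t,x). Define e_i(t,x) := ⟪m, ∂_i m × ∂_t m⟫(t,x) for i = 1,2,3 and b(t,x) := (⟪m, ∂₂m × ∂₃m⟫, ⟪m, ∂₃m × ∂₁m⟫, ⟪m, ∂₁m × ∂₂m⟫)(t,x), where ∂_i are the spatial partial derivatives and ∂_t the time derivative. Then Faraday's law holds pointwise: ∂_t b + ∇ × e = 0, i.e., ∂_t b₁ + ∂₂e₃ − ∂₃e₂ = 0, ∂_t b₂ + ∂₃e₁ − ∂₁e₃ = 0, and ∂_t b₃ + ∂₁e₂ − ∂₂e₁ = 0 at every (t,x). -/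

import Mathlib

open scoped RealInnerProductSpace

noncomputable section

/-- ℝ³ as a Euclidean space. -/
abbrev E3 := EuclideanSpace ℝ (Fin 3)

/-- Space-time ℝ × ℝ³. -/
abbrev SpaceTime := ℝ × E3

/-- Time partial derivative. -/
noncomputable def pdT {F : Type*} [NormedAddCommGroup F] [NormedSpace ℝ F]
    (f : SpaceTime → F) (p : SpaceTime) : F :=
  fderiv ℝ f p ((1 : ℝ), (0 : E3))

/-- Spatial partial derivative in the `i`-th standard coordinate direction. -/
noncomputable def pdX {F : Type*} [NormedAddCommGroup F] [NormedSpace ℝ F]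
    (i : Fin 3) (f : SpaceTime → F) (p : SpaceTime) : F :=
  fderiv ℝ f p ((0 : ℝ), EuclideanSpace.single i 1)

/-- Cross product on ℝ³. -/
noncomputable def cross3 (a b : E3) : E3 :=
  (WithLp.equiv 2 (Fin 3 → ℝ)).symm
    (crossProduct ((WithLp.equiv 2 (Fin 3 → ℝ)) a) ((WithLp.equiv 2 (Fin 3 → ℝ)) b))

/-- Emergent electric field components `e_i = m·(∂_i m × ∂_t m)` (0-based index). -/
noncomputable def eField (m : SpaceTime → E3) (i : Fin 3) (p : SpaceTime) : ℝ :=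
  ⟪m p, cross3 (pdX i m p) (pdT m p)⟫

/-- Emergent magnetic field components `b_i = ½ ε_{ijk} m·(∂_j m × ∂_k m)`
(0-based indices: `bField m 0 = m·(∂₂m × ∂₃m)` etc.). -/
noncomputable def bField (m : SpaceTime → E3) : Fin 3 → SpaceTime → ℝ :=
  ![fun p => ⟪m p, cross3 (pdX 1 m p) (pdX 2 m p)⟫,
    fun p => ⟪m p, cross3 (pdX 2 m p) (pdX 0 m p)⟫,
    fun p => ⟪m p, cross3 (pdX 0 m p) (pdX 1 m p)⟫]

/-! ### Auxiliary material -/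

/-- The cross product as a bilinear map on `E3`. -/
noncomputable def crossLin : E3 →ₗ[ℝ] E3 →ₗ[ℝ] E3 where
  toFun a := ((WithLp.linearEquiv 2 ℝ (Fin 3 → ℝ)).symm.toLinearMap.comp
      (crossProduct ((WithLp.linearEquiv 2 ℝ (Fin 3 → ℝ)) a))).comp
      (WithLp.linearEquiv 2 ℝ (Fin 3 → ℝ)).toLinearMap
  map_add' a b := by ext c; simp [map_add]
  map_smul' r a := by ext c; simp [map_smul]

/-- The cross product as a continuous bilinear map on `E3`. -/
noncomputable def crossL : E3 →L[ℝ] E3 →L[ℝ] E3 :=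
  LinearMap.toContinuousLinearMap
    { toFun := fun a => LinearMap.toContinuousLinearMap (crossLin a)
      map_add' := by intros; ext; simp
      map_smul' := by intros; ext; simp }

lemma crossL_apply (a b : E3) : crossL a b = cross3 a b := rfl

/-- Coordinate formula for the scalar triple product. -/
lemma inner_cross3 (x a b : E3) :
    ⟪x, cross3 a b⟫ = x 0 * (a 1 * b 2 - a 2 * b 1) + x 1 * (a 2 * b 0 - a 0 * b 2)
      + x 2 * (a 0 * b 1 - a 1 * b 0) := by
  simp [PiLp.inner_apply, RCLike.inner_apply, Fin.sum_univ_three, cross3, cross_apply]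
  ring

/-- The scalar triple product is antisymmetric under swapping the cross factors. -/
lemma inner_cross3_swap (x a b : E3) : ⟪x, cross3 a b⟫ = -⟪x, cross3 b a⟫ := by
  rw [inner_cross3, inner_cross3]; ring

/-- Triple product of three vectors orthogonal to a unit vector vanishes. -/
lemma triple_vanish (n a b c : E3) (hn : ⟪n, n⟫ = 1) (ha : ⟪n, a⟫ = 0)
    (hb : ⟪n, b⟫ = 0) (hc : ⟪n, c⟫ = 0) : ⟪a, cross3 b c⟫ = 0 := by
  have key : ⟪n, a⟫ * ⟪n, cross3 b c⟫ + ⟪n, b⟫ * ⟪n, cross3 c a⟫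
      + ⟪n, c⟫ * ⟪n, cross3 a b⟫ = ⟪a, cross3 b c⟫ * ⟪n, n⟫ := by
    simp only [PiLp.inner_apply, RCLike.inner_apply, starRingEnd_apply,
      star_trivial, Fin.sum_univ_three, cross3, cross_apply, WithLp.equiv_symm_apply,
      WithLp.equiv_apply, WithLp.ofLp_toLp, PiLp.toLp_apply, Matrix.cons_val_zero, Matrix.cons_val_one, Matrix.head_cons,
      Matrix.cons_val_two, Matrix.tail_cons]
    ring
  rw [ha, hb, hc, hn] at key
  linarith

/-- Derivative of the directional derivative. -/
lemma hasFDerivAt_D {m : SpaceTime → E3} (hm : ContDiff ℝ 2 m) (p v : SpaceTime) :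
    HasFDerivAt (fun q => fderiv ℝ m q v)
      ((ContinuousLinearMap.apply ℝ E3 v).comp (fderiv ℝ (fderiv ℝ m) p)) p :=
  (ContinuousLinearMap.apply ℝ E3 v).hasFDerivAt.comp p
    (((hm.fderiv_right (m := 1) (by norm_num)).differentiable one_ne_zero p).hasFDerivAt)

/-- Symmetry of the second derivative. -/
lemma symm2 {m : SpaceTime → E3} (hm : ContDiff ℝ 2 m) (p u v : SpaceTime) :
    fderiv ℝ (fderiv ℝ m) p u v = fderiv ℝ (fderiv ℝ m) p v u :=
  (hm.contDiffAt.isSymmSndFDerivAt (by simp)) u v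

/-- Derivative of `q ↦ ⟪m q, ∂_v m × ∂_w m⟫`. -/
lemma fderiv_F {m : SpaceTime → E3} (hm : ContDiff ℝ 2 m) (p v w u : SpaceTime) :
    fderiv ℝ (fun q => ⟪m q, cross3 (fderiv ℝ m q v) (fderiv ℝ m q w)⟫) p u
      = ⟪fderiv ℝ m p u, cross3 (fderiv ℝ m p v) (fderiv ℝ m p w)⟫
      + ⟪m p, cross3 (fderiv ℝ (fderiv ℝ m) p u v) (fderiv ℝ m p w)⟫
      + ⟪m p, cross3 (fderiv ℝ m p v) (fderiv ℝ (fderiv ℝ m) p u w)⟫ := by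
  have hdm : DifferentiableAt ℝ m p := (hm.differentiable two_ne_zero).differentiableAt
  have hg : HasFDerivAt (fun q => cross3 (fderiv ℝ m q v) (fderiv ℝ m q w))
      ((crossL (fderiv ℝ m p v)).comp
          ((ContinuousLinearMap.apply ℝ E3 w).comp (fderiv ℝ (fderiv ℝ m) p))
        + (crossL.comp
            ((ContinuousLinearMap.apply ℝ E3 v).comp (fderiv ℝ (fderiv ℝ m) p))).flip
            (fderiv ℝ m p w)) p := by
    exact (crossL.hasFDerivAt.comp p (hasFDerivAt_D hm p v)).clm_apply (hasFDerivAt_D hm p w)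
  rw [fderiv_inner_apply (𝕜 := ℝ) hdm hg.differentiableAt u, hg.fderiv]
  simp only [ContinuousLinearMap.add_apply, ContinuousLinearMap.coe_comp', Function.comp_apply,
    ContinuousLinearMap.flip_apply, ContinuousLinearMap.apply_apply, crossL_apply,
    inner_add_right]
  ring

/-- `∂m ⊥ m` for unit-length `m`. -/
lemma orth {m : SpaceTime → E3} (hm : ContDiff ℝ 2 m) (hunit : ∀ p, ‖m p‖ = 1)
    (p u : SpaceTime) : ⟪m p, fderiv ℝ m p u⟫ = 0 := by
  have hdm : ∀ q, DifferentiableAt ℝ m q :=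
    fun q => (hm.differentiable two_ne_zero).differentiableAt
  have hconst : (fun q : SpaceTime => ⟪m q, m q⟫) = fun _ => (1 : ℝ) := by
    funext q
    rw [real_inner_self_eq_norm_mul_norm, hunit q, one_mul]
  have h0 : fderiv ℝ (fun q : SpaceTime => ⟪m q, m q⟫) p u = 0 := by
    rw [hconst]; simp
  rw [fderiv_inner_apply (𝕜 := ℝ) (hdm p) (hdm p) u] at h0
  have hcomm := real_inner_comm (m p) (fderiv ℝ m p u)
  linarith

/-- The Bianchi-type cyclic identity for `F(v,w) = m·(∂_v m × ∂_w m)`. -/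
lemma key_cyclic {m : SpaceTime → E3} (hm : ContDiff ℝ 2 m) (hunit : ∀ p, ‖m p‖ = 1)
    (p u v w : SpaceTime) :
    fderiv ℝ (fun q => ⟪m q, cross3 (fderiv ℝ m q v) (fderiv ℝ m q w)⟫) p u
    + fderiv ℝ (fun q => ⟪m q, cross3 (fderiv ℝ m q w) (fderiv ℝ m q u)⟫) p v
    - fderiv ℝ (fun q => ⟪m q, cross3 (fderiv ℝ m q v) (fderiv ℝ m q u)⟫) p w = 0 := by
  have hn : ⟪m p, m p⟫ = 1 := by
    rw [real_inner_self_eq_norm_mul_norm, hunit p, one_mul]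
  have ho := orth hm hunit p
  rw [fderiv_F hm p v w u, fderiv_F hm p w u v, fderiv_F hm p v u w,
    symm2 hm p v u, symm2 hm p w v, symm2 hm p w u]
  have h1 := triple_vanish (m p) (fderiv ℝ m p u) (fderiv ℝ m p v) (fderiv ℝ m p w)
    hn (ho u) (ho v) (ho w)
  have h2 := triple_vanish (m p) (fderiv ℝ m p v) (fderiv ℝ m p w) (fderiv ℝ m p u)
    hn (ho v) (ho w) (ho u)
  have h3 := triple_vanish (m p) (fderiv ℝ m p w) (fderiv ℝ m p v) (fderiv ℝ m p u)
    hn (ho w) (ho v) (ho u)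
  have hs := inner_cross3_swap (m p) (fderiv ℝ m p w) (fderiv ℝ (fderiv ℝ m) p u v)
  linarith

/-- Faraday's law `∂_t b + ∇ × e = 0` for the emergent electromagnetic fields
of a smoothly evolving unit-length magnetization field. -/
theorem emergent_faraday_law (m : SpaceTime → E3) (hm : ContDiff ℝ 2 m)
    (hunit : ∀ p, ‖m p‖ = 1) (p : SpaceTime) :
    pdT (bField m 0) p + pdX 1 (eField m 2) p - pdX 2 (eField m 1) p = 0
    ∧ pdT (bField m 1) p + pdX 2 (eField m 0) p - pdX 0 (eField m 2) p = 0
    ∧ pdT (bField m 2) p + pdX 0 (eField m 1) p - pdX 1 (eField m 0) p = 0 := by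
  refine ⟨?_, ?_, ?_⟩
  · exact key_cyclic hm hunit p ((1 : ℝ), (0 : E3))
      ((0 : ℝ), EuclideanSpace.single 1 1) ((0 : ℝ), EuclideanSpace.single 2 1)
  · exact key_cyclic hm hunit p ((1 : ℝ), (0 : E3))
      ((0 : ℝ), EuclideanSpace.single 2 1) ((0 : ℝ), EuclideanSpace.single 0 1)
  · exact key_cyclic hm hunit p ((1 : ℝ), (0 : E3))
      ((0 : ℝ), EuclideanSpace.single 0 1) ((0 : ℝ), EuclideanSpace.single 1 1)
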